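/- The functor P : SOp → LT from symmetric operads to Lawvere theories is left adjoint to the functor Q : LT → SOp, with unit η_O : O → Q(P(O)) sending g ∈ O_n to the span (id_n, !, g) and counit ε_T : P(Q(T)) → T sending a span (φ, f, (g_i)_{i≤m}) to (g_1 × ... × g_m) ∘ π_φ; furthermore η_O is injective, so P is faithful. -/

import Mathlib

/-- One step of the lexicographic decomposition of a sigma of `Fin`s. -/
def finSigmaSucc {k : ℕ} (ns : Fin (k + 1) → ℕ) :
    (Σ i : Fin (k + 1), Fin (ns i)) ≃ (Fin (ns 0) ⊕ Σ i : Fin k, Fin (ns i.succ)) where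
  toFun p := Fin.cases (motive := fun i => Fin (ns i) → Fin (ns 0) ⊕ Σ i : Fin k, Fin (ns i.succ))
      (fun j => Sum.inl j) (fun i j => Sum.inr ⟨i, j⟩) p.1 p.2
  invFun q := q.elim (fun j => ⟨0, j⟩) (fun q => ⟨q.1.succ, q.2⟩)
  left_inv := by rintro ⟨i, j⟩; induction i using Fin.cases <;> simp
  right_inv := by rintro (j | ⟨i, j⟩) <;> simp

/-- The lexicographic identification of `Σ i, Fin (ns i)` with `Fin (∑ i, ns i)`. -/
def finSigma : ∀ {k : ℕ} (ns : Fin k → ℕ), (Σ i : Fin k, Fin (ns i)) ≃ Fin (∑ i, ns i)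
  | 0, ns => (Equiv.equivOfIsEmpty _ _ : (Σ i : Fin 0, Fin (ns i)) ≃ Fin 0).trans
      (finCongr (by simp))
  | k + 1, ns =>
    (finSigmaSucc ns).trans <|
      ((Equiv.refl (Fin (ns 0))).sumCongr (finSigma fun i => ns i.succ)).trans <|
        finSumFinEquiv.trans (finCongr (Fin.sum_univ_succ ns).symm)

/-- Operadic composition of permutations: on the lexicographic block decomposition,
`⟨i, r⟩ ↦ ⟨τ i, σs (τ i) r⟩`. -/
def symComp {k : ℕ} (ns : Fin k → ℕ) (σs : ∀ i, Equiv.Perm (Fin (ns i)))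
    (τ : Equiv.Perm (Fin k)) : Equiv.Perm (Fin (∑ i, ns i)) :=
  (finCongr (Equiv.sum_comp τ ns)).symm.trans <|
    ((finSigma fun i => ns (τ i)).symm.trans
      ((Equiv.sigmaCongr τ fun i => σs (τ i)).trans (finSigma ns)))

/-- A symmetric operad. -/
structure SymOperad where
  ops : ℕ → Type
  unit : ops 1
  comp : ∀ {k : ℕ} (ns : Fin k → ℕ), (∀ i, ops (ns i)) → ops k → ops (∑ i, ns i)
  act : ∀ {n : ℕ}, Equiv.Perm (Fin n) → ops n → ops n
  act_one : ∀ {n : ℕ} (x : ops n), act (Equiv.refl (Fin n)) x = x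
  act_mul : ∀ {n : ℕ} (σ τ : Equiv.Perm (Fin n)) (x : ops n),
    act (σ * τ) x = act σ (act τ x)
  comp_unit_left : ∀ {n : ℕ} (g : ops n),
    HEq (comp (fun _ : Fin n => 1) (fun _ => unit) g) g
  comp_unit_right : ∀ {n : ℕ} (g : ops n),
    HEq (comp (fun _ : Fin 1 => n) (fun _ => g) unit) g
  comp_assoc : ∀ {k : ℕ} (ns : Fin k → ℕ) (ms : ∀ i, Fin (ns i) → ℕ)
    (hs : ∀ i j, ops (ms i j)) (gs : ∀ i, ops (ns i)) (f : ops k),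
    HEq (comp (fun p => ms ((finSigma ns).symm p).1 ((finSigma ns).symm p).2)
          (fun p => hs ((finSigma ns).symm p).1 ((finSigma ns).symm p).2)
          (comp ns gs f))
        (comp (fun i => ∑ j, ms i j) (fun i => comp (ms i) (hs i) (gs i)) f)
  equiv_inner : ∀ {k : ℕ} (ns : Fin k → ℕ) (σs : ∀ i, Equiv.Perm (Fin (ns i)))
    (gs : ∀ i, ops (ns i)) (f : ops k),
    comp ns (fun i => act (σs i) (gs i)) f
      = act (symComp ns σs (Equiv.refl (Fin k))) (comp ns gs f)
  equiv_outer : ∀ {k : ℕ} (ns : Fin k → ℕ) (τ : Equiv.Perm (Fin k))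
    (gs : ∀ i, ops (ns i)) (f : ops k),
    HEq (comp (fun i => ns (τ i)) (fun i => gs (τ i)) (act τ f))
        (act (symComp ns (fun i => Equiv.refl (Fin (ns i))) τ) (comp ns gs f))

/-- Composition `a ∗ b` of unary operations of an operad. -/
def SymOperad.comp1 (O : SymOperad) (a b : O.ops 1) : O.ops 1 :=
  cast (congrArg O.ops (by simp)) (O.comp (fun _ : Fin 1 => 1) (fun _ => a) b)

/-- Composition `⟨c 1, …, c r⟩ ∗ h` of an `r`-ary operation with unary operations. -/
def SymOperad.unaryComp (O : SymOperad) {r : ℕ} (c : Fin r → O.ops 1) (h : O.ops r) :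
    O.ops r :=
  cast (congrArg O.ops (by simp)) (O.comp (fun _ : Fin r => 1) c h)
/-- A Lawvere theory: a category with objects the natural numbers where `n` is the
`n`-fold power of `1` with chosen projections.  `comp f g` is `f` followed by `g`. -/
structure LawTheory where
  Hom : ℕ → ℕ → Type
  id : ∀ n : ℕ, Hom n n
  comp : ∀ {a b c : ℕ}, Hom a b → Hom b c → Hom a c
  id_comp : ∀ {a b : ℕ} (f : Hom a b), comp (id a) f = f
  comp_id : ∀ {a b : ℕ} (f : Hom a b), comp f (id b) = f
  assoc : ∀ {a b c d : ℕ} (f : Hom a b) (g : Hom b c) (h : Hom c d),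
    comp (comp f g) h = comp f (comp g h)
  proj : ∀ (n : ℕ), Fin n → Hom n 1
  tuple : ∀ {a n : ℕ}, (Fin n → Hom a 1) → Hom a n
  tuple_proj : ∀ {a n : ℕ} (fs : Fin n → Hom a 1) (i : Fin n),
    comp (tuple fs) (proj n i) = fs i
  tuple_eta : ∀ {a n : ℕ} (g : Hom a n),
    tuple (fun i => comp g (proj n i)) = g

namespace LawTheory

variable (T : LawTheory)

/-- The structural morphism `π_φ : n → m` induced by a function `φ : (m] → (n]`. -/
def pi {n m : ℕ} (φ : Fin m → Fin n) : T.Hom n m :=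
  T.tuple fun i => T.proj n (φ i)

/-- The product map `f₁ × ⋯ × f_k : ∑ ns i → k` of operations `fs i : ns i → 1`,
formed via the chosen projections and the lexicographic block decomposition. -/
def prodMap {k : ℕ} (ns : Fin k → ℕ) (fs : ∀ i, T.Hom (ns i) 1) :
    T.Hom (∑ i, ns i) k :=
  T.tuple fun i => T.comp (T.pi fun j : Fin (ns i) => finSigma ns ⟨i, j⟩) (fs i)

/-- Operadic composition of the operations of a Lawvere theory:
`⟨f₁,…,f_k⟩ ∗ f = f ∘ (f₁ × ⋯ × f_k)`. -/
def opComp {k : ℕ} (ns : Fin k → ℕ) (fs : ∀ i, T.Hom (ns i) 1) (f : T.Hom k 1) :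
    T.Hom (∑ i, ns i) 1 :=
  T.comp (T.prodMap ns fs) f

/-- The action `σ · f = f ∘ π_σ` of a permutation on an operation. -/
def opAct {n : ℕ} (σ : Equiv.Perm (Fin n)) (f : T.Hom n 1) : T.Hom n 1 :=
  T.comp (T.pi ⇑σ) f

/-- A morphism `f : a → b` is invertible (an isomorphism). -/
def IsInvertible {a b : ℕ} (f : T.Hom a b) : Prop :=
  ∃ g : T.Hom b a, T.comp f g = T.id a ∧ T.comp g f = T.id b

/-- Structural morphisms: the closure under isomorphism of the image of the unique
interpretation from the initial Lawvere theory `𝔽ᵒᵖ`. -/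
def Structural {n m : ℕ} (f : T.Hom n m) : Prop :=
  ∃ (φ : Fin m → Fin n) (u : T.Hom n n) (v : T.Hom m m),
    T.IsInvertible u ∧ T.IsInvertible v ∧ f = T.comp u (T.comp (T.pi φ) v)

/-- `e` is left orthogonal to `m`: unique diagonal fillers exist. -/
def Orthogonal {a b c d : ℕ} (e : T.Hom a b) (m : T.Hom c d) : Prop :=
  ∀ (u : T.Hom a c) (v : T.Hom b d), T.comp u m = T.comp e v →
    ∃! w : T.Hom b c, T.comp e w = u ∧ T.comp w m = v

/-- Analytic morphisms: those right orthogonal to all structural morphisms. -/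
def Analytic {c d : ℕ} (f : T.Hom c d) : Prop :=
  ∀ {a b : ℕ} (e : T.Hom a b), T.Structural e → T.Orthogonal e f

/-- The canonical map `ρ_n : S_n × Aut(1)ⁿ → Hom(n,n)`,
`(σ, a) ↦ (a₁ × ⋯ × a_n) ∘ π_σ`. -/
def rho (n : ℕ)
    (p : Equiv.Perm (Fin n) × (Fin n → {f : T.Hom 1 1 // T.IsInvertible f})) :
    T.Hom n n :=
  T.comp (T.pi ⇑p.1) (T.tuple fun i => T.comp (T.proj n i) (p.2 i).1)

/-- `T` has simple automorphisms: each `ρ_n` is a bijection onto the automorphisms. -/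
def HasSimpleAut : Prop :=
  ∀ n : ℕ, Function.Injective (T.rho n) ∧
    Set.range (T.rho n) = {f : T.Hom n n | T.IsInvertible f}

/-- `T` is an analytic Lawvere theory: structural and analytic morphisms form a
factorization system and `T` has simple automorphisms. -/
def IsAnalyticTheory : Prop :=
  (∀ {n m : ℕ} (f : T.Hom n m), ∃ (k : ℕ) (e : T.Hom n k) (g : T.Hom k m),
      T.Structural e ∧ T.Analytic g ∧ f = T.comp e g) ∧ T.HasSimpleAut

end LawTheory

/-- A morphism of symmetric operads. -/
structure OperadHom (O O' : SymOperad) where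
  map : ∀ n : ℕ, O.ops n → O'.ops n
  map_unit : map 1 O.unit = O'.unit
  map_comp : ∀ {k : ℕ} (ns : Fin k → ℕ) (gs : ∀ i, O.ops (ns i)) (f : O.ops k),
    map _ (O.comp ns gs f) = O'.comp ns (fun i => map _ (gs i)) (map k f)
  map_act : ∀ {n : ℕ} (σ : Equiv.Perm (Fin n)) (x : O.ops n),
    map n (O.act σ x) = O'.act σ (map n x)

/-- An interpretation of Lawvere theories: an identity-on-objects functor
preserving the chosen projections. -/
structure LawHom (T T' : LawTheory) where
  map : ∀ {a b : ℕ}, T.Hom a b → T'.Hom a b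
  map_id : ∀ n : ℕ, map (T.id n) = T'.id n
  map_comp : ∀ {a b c : ℕ} (f : T.Hom a b) (g : T.Hom b c),
    map (T.comp f g) = T'.comp (map f) (map g)
  map_proj : ∀ (n : ℕ) (i : Fin n), map (T.proj n i) = T'.proj n i

/-- `S` is the symmetric operad of operations of the Lawvere theory `T`. -/
def IsOperadOf (T : LawTheory) (S : SymOperad) : Prop :=
  S.ops = (fun n => T.Hom n 1) ∧ HEq S.unit (T.id 1) ∧
    HEq (@SymOperad.comp S) (@LawTheory.opComp T) ∧
    HEq (@SymOperad.act S) (@LawTheory.opAct T)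
/-- A span `(φ, f, (g_i))` with codomain component `1`: an operation of the span
Lawvere theory `P(O)`, given by an arity `r`, a function leg `φ : (r] → (n]` and an
operation `g ∈ O_r`. -/
def PreOp (O : SymOperad) (n : ℕ) : Type := Σ r : ℕ, (Fin r → Fin n) × O.ops r

/-- Equivalence of spans: `(φ, g) ∼ (φ ∘ σ, σ⁻¹ · g)`. -/
def PreRel (O : SymOperad) (n : ℕ) : PreOp O n → PreOp O n → Prop := fun x y =>
  ∃ σ : Equiv.Perm (Fin x.1), y = ⟨x.1, x.2.1 ∘ ⇑σ, O.act σ⁻¹ x.2.2⟩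

/-- Morphism components of the span Lawvere theory: equivalence classes of spans. -/
def SpanOp (O : SymOperad) (n : ℕ) : Type := Quot (PreRel O n)

/-- Composition of spans: pullback of the monotone leg along the function leg
together with operadic composition. -/
def compPre (O : SymOperad) {n m : ℕ} (x : PreOp O m) (y : Fin m → PreOp O n) :
    PreOp O n :=
  ⟨∑ l, (y (x.2.1 l)).1,
   fun p => (y (x.2.1 ((finSigma _).symm p).1)).2.1 ((finSigma _).symm p).2,
   O.comp (fun l => (y (x.2.1 l)).1) (fun l => (y (x.2.1 l)).2.2) x.2.2⟩

/-- An identification of a Lawvere theory `T` with the span Lawvere theory `P(O)`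
of a symmetric operad `O`: morphisms `n → m` are `m`-tuples of equivalence classes
of spans, and identities, projections, tupling and composition are computed by the
span formulas. -/
structure SpanModel (O : SymOperad) (T : LawTheory) where
  e : ∀ {n m : ℕ}, T.Hom n m ≃ (Fin m → SpanOp O n)
  id_eq : ∀ n : ℕ, e (T.id n) = fun i => Quot.mk _ ⟨1, fun _ => i, O.unit⟩
  proj_eq : ∀ (n : ℕ) (i : Fin n),
    e (T.proj n i) = fun _ : Fin 1 => Quot.mk _ ⟨1, fun _ => i, O.unit⟩
  tuple_eq : ∀ {a n : ℕ} (fs : Fin n → T.Hom a 1),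
    e (T.tuple fs) = fun i => e (fs i) 0
  comp_eq : ∀ {n m k : ℕ} (f : T.Hom n m) (g : T.Hom m k)
    (y : Fin m → PreOp O n) (x : Fin k → PreOp O m),
    (∀ i, e f i = Quot.mk _ (y i)) → (∀ j, e g j = Quot.mk _ (x j)) →
    ∀ j, e (T.comp f g) j = Quot.mk _ (compPre O (x j) y)
/-- A family of maps `O_n → T(n,1)` which is a morphism of symmetric operads from `O`
to the operad of operations `Q(T)` of the Lawvere theory `T`. -/
def IsOperadMapToQ (O : SymOperad) (T : LawTheory)
    (h : ∀ n : ℕ, O.ops n → T.Hom n 1) : Prop :=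
  h 1 O.unit = T.id 1 ∧
  (∀ {k : ℕ} (ns : Fin k → ℕ) (gs : ∀ i, O.ops (ns i)) (f : O.ops k),
    h _ (O.comp ns gs f) = T.opComp ns (fun i => h _ (gs i)) (h k f)) ∧
  (∀ {n : ℕ} (σ : Equiv.Perm (Fin n)) (g : O.ops n),
    h n (O.act σ g) = T.opAct σ (h n g))

/-- A family of maps `T(n,1) → O_n` which is a morphism of symmetric operads from the
operad of operations `Q(T)` of the Lawvere theory `T` to `O`. -/
def IsQOperadHom (T : LawTheory) (O : SymOperad)
    (q : ∀ n : ℕ, T.Hom n 1 → O.ops n) : Prop :=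
  q 1 (T.id 1) = O.unit ∧
  (∀ {k : ℕ} (ns : Fin k → ℕ) (fs : ∀ i, T.Hom (ns i) 1) (f : T.Hom k 1),
    q _ (T.opComp ns fs f) = O.comp ns (fun i => q _ (fs i)) (q k f)) ∧
  (∀ {n : ℕ} (σ : Equiv.Perm (Fin n)) (f : T.Hom n 1),
    q n (T.opAct σ f) = O.act σ (q n f))
/-- The unit `η_O : O → Q(P(O))`, sending `g ∈ O_n` to the span `(id_n, !, g)`. -/
def SpanModel.eta {O : SymOperad} {T : LawTheory} (M : SpanModel O T)
    (n : ℕ) (g : O.ops n) : T.Hom n 1 :=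
  M.e.symm (fun _ => Quot.mk _ ⟨n, fun l => l, g⟩)

section Aux

lemma finSigma_val : ∀ {k : ℕ} (ns : Fin k → ℕ) (p : Σ i : Fin k, Fin (ns i)),
    ((finSigma ns p : Fin (∑ i, ns i)) : ℕ)
      = (∑ i, if i < p.1 then ns i else 0) + (p.2 : ℕ)
  | 0, ns, p => p.1.elim0
  | k + 1, ns, ⟨i, j⟩ => by
    induction i using Fin.cases with
    | zero =>
        simp [finSigma, finSigmaSucc, Fin.not_lt_zero]
    | succ i =>
        have ih := finSigma_val (fun t => ns t.succ) ⟨i, j⟩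
        simp only [finSigma, finSigmaSucc, Equiv.trans_apply, Equiv.coe_fn_mk,
          Fin.cases_succ, Equiv.sumCongr_apply, Sum.map_inr,
          finSumFinEquiv_apply_right, finCongr_apply, Fin.coe_cast, Fin.coe_natAdd]
        rw [ih, Fin.sum_univ_succ]
        simp [Fin.succ_lt_succ_iff, Fin.succ_pos]
        ring

lemma sum_range_ite (v : ℕ) : ∀ (k : ℕ), v ≤ k →
    (∑ x ∈ Finset.range k, (if x < v then 1 else 0)) = v := by
  intro k
  induction k with
  | zero => intro h; interval_cases v; simp
  | succ k ih =>
      intro h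
      rw [Finset.sum_range_succ]
      rcases Nat.lt_or_ge k v with hk | hk
      · have hv : v = k + 1 := by omega
        subst hv
        rw [if_pos hk]
        have : (∑ x ∈ Finset.range k, (if x < k + 1 then 1 else 0))
            = ∑ x ∈ Finset.range k, 1 := by
          refine Finset.sum_congr rfl fun x hx => ?_
          rw [if_pos (by simpa using Nat.lt_succ_of_lt (Finset.mem_range.mp hx))]
        rw [this]; simp
      · rw [if_neg (by omega), ih (by omega)]; omega

lemma finSigma_one_val {k : ℕ} (p : Σ _ : Fin k, Fin 1) :
    ((finSigma (fun _ : Fin k => 1) p : Fin _) : ℕ) = (p.1 : ℕ) := by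
  rw [finSigma_val]
  have h2 : ((p.2 : Fin 1) : ℕ) = 0 := by omega
  rw [h2]
  have h1 : (∑ i : Fin k, if i < p.1 then (1:ℕ) else 0)
      = ∑ x ∈ Finset.range k, (if x < (p.1 : ℕ) then 1 else 0) := by
    rw [← Fin.sum_univ_eq_sum_range (fun x => if x < (p.1:ℕ) then (1:ℕ) else 0) k]
    exact Finset.sum_congr rfl fun i _ => if_congr Fin.lt_def rfl rfl
  rw [h1, sum_range_ite _ _ (le_of_lt p.1.2)]; omega

lemma finSigma_fin1_val {r : ℕ} (p : Σ _ : Fin 1, Fin r) :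
    ((finSigma (fun _ : Fin 1 => r) p : Fin _) : ℕ) = (p.2 : ℕ) := by
  rw [finSigma_val]
  have h1 : ∀ i : Fin 1, ¬ (i < p.1) := fun i => by
    simp [Fin.lt_def, Fin.val_eq_zero]
  simp [h1]

lemma finSigma_symm_fst_one {r : ℕ} (p : Fin (∑ _ : Fin r, 1)) :
    ((((finSigma (fun _ : Fin r => 1)).symm p).1 : Fin r) : ℕ) = (p : ℕ) := by
  conv_rhs => rw [← (finSigma (fun _ : Fin r => 1)).apply_symm_apply p]
  rw [finSigma_one_val]

lemma finSigma_symm_snd_fin1 {r : ℕ} (p : Fin (∑ _ : Fin 1, r)) :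
    ((((finSigma (fun _ : Fin 1 => r)).symm p).2 : Fin r) : ℕ) = (p : ℕ) := by
  conv_rhs => rw [← (finSigma (fun _ : Fin 1 => r)).apply_symm_apply p]
  rw [finSigma_fin1_val]

end Aux

section TheoryLemmas

variable {T : LawTheory}

lemma comp_tuple {a b n : ℕ} (g : T.Hom a b) (fs : Fin n → T.Hom b 1) :
    T.comp g (T.tuple fs) = T.tuple (fun i => T.comp g (fs i)) := by
  conv_lhs => rw [← T.tuple_eta (T.comp g (T.tuple fs))]
  congr 1
  funext i
  rw [T.assoc, T.tuple_proj]

lemma pi_proj {n m : ℕ} (φ : Fin m → Fin n) (i : Fin m) :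
    T.comp (T.pi φ) (T.proj m i) = T.proj n (φ i) := T.tuple_proj _ _

lemma pi_pi {n m k : ℕ} (φ : Fin m → Fin n) (ψ : Fin k → Fin m) :
    T.comp (T.pi φ) (T.pi ψ) = T.pi (φ ∘ ψ) := by
  show T.comp (T.pi φ) (T.tuple fun i => T.proj m (ψ i)) = _
  rw [comp_tuple]
  exact congrArg T.tuple (funext fun i => pi_proj φ (ψ i))

lemma pi_id {n : ℕ} : T.pi (fun i : Fin n => i) = T.id n := by
  have h := T.tuple_eta (T.id n)
  have h2 : (fun i => T.comp (T.id n) (T.proj n i)) = fun i => T.proj n i :=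
    funext fun i => T.id_comp _
  rw [h2] at h
  exact h

lemma tuple_const {a : ℕ} (hu : T.proj 1 0 = T.id 1) (x : T.Hom a 1) :
    T.tuple (fun _ : Fin 1 => x) = x := by
  have h := T.tuple_eta x
  have h2 : (fun i : Fin 1 => T.comp x (T.proj 1 i)) = fun _ => x :=
    funext fun i => by rw [Subsingleton.elim i (0 : Fin 1), hu, T.comp_id]
  rw [h2] at h
  exact h

end TheoryLemmas

section OperadLemmas

variable {O : SymOperad}

lemma one_perm_eq_refl {n : ℕ} : (1 : Equiv.Perm (Fin n)) = Equiv.refl (Fin n) := rfl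

lemma act_one' {n : ℕ} (x : O.ops n) : O.act 1 x = x := by
  rw [one_perm_eq_refl]; exact O.act_one x

lemma act_inv_act {n : ℕ} (σ : Equiv.Perm (Fin n)) (g : O.ops n) :
    O.act σ⁻¹ (O.act σ g) = g := by
  rw [← O.act_mul, inv_mul_cancel, act_one']

lemma preRel_refl {n : ℕ} (p : PreOp O n) : PreRel O n p p := by
  refine ⟨1, ?_⟩
  rw [inv_one, act_one']
  rcases p with ⟨r, φ, g⟩
  simp
  rfl

lemma heq_fun {n a b : ℕ} (h : a = b) (f : Fin a → Fin n) (g : Fin b → Fin n)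
    (hv : ∀ j : Fin a, f j = g (Fin.cast h j)) : HEq f g := by
  subst h
  exact heq_of_eq (funext fun j => hv j)

lemma span_eq {n : ℕ} {r r' : ℕ} (hr : r = r')
    {φ : Fin r → Fin n} {φ' : Fin r' → Fin n} {g : O.ops r} {g' : O.ops r'}
    (hφ : HEq φ φ') (hg : HEq g g') :
    (⟨r, φ, g⟩ : PreOp O n) = ⟨r', φ', g'⟩ := by
  subst hr
  rw [eq_of_heq hφ, eq_of_heq hg]

lemma compPre_proj {n m : ℕ} (i : Fin m) (y : Fin m → PreOp O n) :
    compPre O ⟨1, fun _ => i, O.unit⟩ y = y i := by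
  have hr : (∑ _l : Fin 1, (y i).1) = (y i).1 := by simp
  have hy : (⟨(y i).1, (y i).2.1, (y i).2.2⟩ : PreOp O n) = y i := rfl
  rw [← hy]
  refine span_eq hr (heq_fun hr _ _ fun p => congrArg (y i).2.1 (Fin.ext ?_))
    (O.comp_unit_right (y i).2.2)
  exact finSigma_symm_snd_fin1 p

lemma compPre_eta {n r : ℕ} (φ : Fin r → Fin n) (g : O.ops r) :
    compPre O ⟨r, fun l => l, g⟩ (fun l => ⟨1, fun _ => φ l, O.unit⟩)
      = ⟨r, φ, g⟩ := by
  have hr : (∑ _l : Fin r, (1:ℕ)) = r := by simp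
  refine span_eq hr (heq_fun hr _ _ fun p => congrArg φ (Fin.ext ?_))
    (O.comp_unit_left g)
  exact finSigma_symm_fst_one p

lemma compPre_id {k : ℕ} (ns : Fin k → ℕ) (gs : ∀ i, O.ops (ns i)) (f : O.ops k) :
    compPre O ⟨k, fun l => l, f⟩
        (fun i => (⟨ns i, fun j => finSigma ns ⟨i, j⟩, gs i⟩ : PreOp O (∑ i, ns i)))
      = ⟨∑ i, ns i, fun p => p, O.comp ns gs f⟩ := by
  refine span_eq rfl (heq_of_eq (funext fun p => ?_)) HEq.rfl
  show finSigma ns ⟨((finSigma ns).symm p).1, ((finSigma ns).symm p).2⟩ = p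
  exact (finSigma ns).apply_symm_apply p

end OperadLemmas

section ModelLemmas

variable {O : SymOperad} {T : LawTheory} (M : SpanModel O T)

lemma e_pi {n m : ℕ} (φ : Fin m → Fin n) :
    M.e (T.pi φ) = fun i => Quot.mk _ ⟨1, fun _ => φ i, O.unit⟩ := by
  show M.e (T.tuple fun i => T.proj n (φ i)) = _
  rw [M.tuple_eq]
  funext i
  rw [M.proj_eq]

lemma e_eta {n : ℕ} (g : O.ops n) :
    M.e (M.eta n g) = fun _ : Fin 1 => Quot.mk _ ⟨n, fun l => l, g⟩ :=
  M.e.apply_symm_apply _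

lemma e_comp_pi_eta {n r : ℕ} (φ : Fin r → Fin n) (g : O.ops r) :
    M.e (T.comp (T.pi φ) (M.eta r g)) = fun _ : Fin 1 => Quot.mk _ ⟨r, φ, g⟩ := by
  funext j
  rw [M.comp_eq (T.pi φ) (M.eta r g) (fun i => ⟨1, fun _ => φ i, O.unit⟩)
    (fun _ => ⟨r, fun l => l, g⟩)
    (fun i => congrFun (e_pi M φ) i) (fun j => congrFun (e_eta M g) j) j]
  exact congrArg (Quot.mk _) (compPre_eta φ g)

lemma e_comp_proj {n m : ℕ} (f : T.Hom n m) (y : Fin m → PreOp O n)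
    (hy : ∀ i, M.e f i = Quot.mk _ (y i)) (i : Fin m) :
    M.e (T.comp f (T.proj m i)) = fun _ : Fin 1 => Quot.mk _ (y i) := by
  funext j
  rw [M.comp_eq f (T.proj m i) y (fun _ => ⟨1, fun _ => i, O.unit⟩) hy
    (fun j => congrFun (M.proj_eq m i) j) j]
  exact congrArg (Quot.mk _) (compPre_proj i y)

lemma comp_proj_eq_pi_eta {n m : ℕ} (f : T.Hom n m) (y : Fin m → PreOp O n)
    (hy : ∀ i, M.e f i = Quot.mk _ (y i)) (i : Fin m) :
    T.comp f (T.proj m i) = T.comp (T.pi (y i).2.1) (M.eta (y i).1 (y i).2.2) := by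
  apply M.e.injective
  rw [e_comp_proj M f y hy i, e_comp_pi_eta M]
  rfl

lemma eta_unit : M.eta 1 O.unit = T.id 1 := by
  have : T.id 1 = M.e.symm (M.e (T.id 1)) := (M.e.symm_apply_apply _).symm
  rw [this, M.id_eq]
  unfold SpanModel.eta
  exact congrArg M.e.symm (funext fun i => by
    congr 1
    exact congrArg (fun ψ => (⟨1, ψ, O.unit⟩ : PreOp O 1))
      (funext fun l => Subsingleton.elim _ _))

lemma e_prodMap_eta {k : ℕ} (ns : Fin k → ℕ) (gs : ∀ i, O.ops (ns i)) :
    M.e (T.prodMap ns (fun i => M.eta (ns i) (gs i)))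
      = fun i => Quot.mk _ ⟨ns i, fun j => finSigma ns ⟨i, j⟩, gs i⟩ := by
  show M.e (T.tuple fun i => T.comp (T.pi fun j => finSigma ns ⟨i, j⟩)
      (M.eta (ns i) (gs i))) = _
  rw [M.tuple_eq]
  funext i
  rw [e_comp_pi_eta M]

lemma eta_comp {k : ℕ} (ns : Fin k → ℕ) (gs : ∀ i, O.ops (ns i)) (f : O.ops k) :
    M.eta _ (O.comp ns gs f)
      = T.opComp ns (fun i => M.eta _ (gs i)) (M.eta k f) := by
  apply M.e.injective
  rw [e_eta M]
  show _ = M.e (T.comp (T.prodMap ns fun i => M.eta (ns i) (gs i)) (M.eta k f))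
  funext j
  rw [M.comp_eq _ (M.eta k f)
    (fun i => ⟨ns i, fun j => finSigma ns ⟨i, j⟩, gs i⟩)
    (fun _ => ⟨k, fun l => l, f⟩)
    (fun i => congrFun (e_prodMap_eta M ns gs) i)
    (fun j => congrFun (e_eta M f) j) j]
  exact (congrArg (Quot.mk _) (compPre_id ns gs f)).symm

lemma eta_act {n : ℕ} (σ : Equiv.Perm (Fin n)) (g : O.ops n) :
    M.eta n (O.act σ g) = T.opAct σ (M.eta n g) := by
  apply M.e.injective
  rw [e_eta M]
  show _ = M.e (T.comp (T.pi ⇑σ) (M.eta n g))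
  rw [e_comp_pi_eta M]
  funext j
  refine Quot.sound ⟨σ, ?_⟩
  rw [act_inv_act]
  rfl

lemma eta_isOperadMap : IsOperadMapToQ O T M.eta :=
  ⟨eta_unit M, fun ns gs f => eta_comp M ns gs f, fun σ g => eta_act M σ g⟩

end ModelLemmas

section Part1

variable {O : SymOperad}

lemma spanCls_respects {n : ℕ} : ∀ (a b : PreOp O n), PreRel O n a b →
    ({q | PreRel O n a q} : Set (PreOp O n)) = {q | PreRel O n b q} := by
  rintro a b ⟨σ, rfl⟩
  ext q
  constructor
  · rintro ⟨τ, rfl⟩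
    refine ⟨σ⁻¹ * τ, ?_⟩
    have h1 : (a.2.1 ∘ ⇑σ) ∘ ⇑(σ⁻¹ * τ) = a.2.1 ∘ ⇑τ := by
      funext j
      simp [Equiv.Perm.mul_apply]
    have h2 : O.act (σ⁻¹ * τ)⁻¹ (O.act σ⁻¹ a.2.2) = O.act τ⁻¹ a.2.2 := by
      rw [← O.act_mul]
      congr 1
      group
    rw [h1, h2]
  · rintro ⟨ρ, rfl⟩
    refine ⟨σ * ρ, ?_⟩
    have h1 : a.2.1 ∘ ⇑(σ * ρ) = (a.2.1 ∘ ⇑σ) ∘ ⇑ρ := by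
      funext j
      simp [Equiv.Perm.mul_apply]
    have h2 : O.act (σ * ρ)⁻¹ a.2.2 = O.act ρ⁻¹ (O.act σ⁻¹ a.2.2) := by
      rw [← O.act_mul]
      congr 1
    rw [h1, h2]

lemma eta_injective {T : LawTheory} (M : SpanModel O T) (n : ℕ) :
    Function.Injective (M.eta n) := by
  intro g g' h
  have h2 := congrFun (M.e.symm.injective h) 0
  have h3 := congrArg (Quot.lift (fun p => ({q | PreRel O n p q} : Set (PreOp O n)))
    spanCls_respects) h2
  have h4 : PreRel O n ⟨n, fun l => l, g⟩ ⟨n, fun l => l, g'⟩ := by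
    have hb : (⟨n, fun l => l, g'⟩ : PreOp O n) ∈
        Quot.lift (fun p => ({q | PreRel O n p q} : Set (PreOp O n)))
          spanCls_respects (Quot.mk _ ⟨n, fun l => l, g'⟩) := preRel_refl _
    rw [← h3] at hb
    exact hb
  obtain ⟨σ, hσ⟩ := h4
  have h5 := eq_of_heq (Sigma.mk.inj_iff.mp hσ).2
  have h6 : (fun l : Fin n => l) = (fun l : Fin n => l) ∘ ⇑σ :=
    congrArg Prod.fst h5
  have h7 : g' = O.act σ⁻¹ g := congrArg Prod.snd h5
  have hσ1 : σ = 1 := Equiv.ext fun l => (congrFun h6 l).symm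
  rw [hσ1, inv_one, act_one'] at h7
  exact h7.symm

end Part1

section L1

lemma heq_app {O : SymOperad} {T' : LawTheory} (h : ∀ n, O.ops n → T'.Hom n 1)
    {a b : ℕ} (hab : a = b) {x : O.ops a} {y : O.ops b} (hxy : HEq x y) :
    HEq (h a x) (h b y) := by
  subst hab
  rw [eq_of_heq hxy]

lemma heq_comp_right {T : LawTheory} {a a' b c : ℕ} (ha : a = a')
    {f : T.Hom a b} {f' : T.Hom a' b} (hf : HEq f f') (g : T.Hom b c) :
    HEq (T.comp f g) (T.comp f' g) := by
  subst ha
  rw [eq_of_heq hf]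

lemma heq_pi {T : LawTheory} {n n' m : ℕ} (h : n = n') (φ : Fin m → Fin n)
    (φ' : Fin m → Fin n') (hv : ∀ j, (φ j : ℕ) = (φ' j : ℕ)) :
    HEq (T.pi φ) (T.pi φ') := by
  subst h
  rw [show φ = φ' from funext fun j => Fin.ext (hv j)]

lemma proj_one_eq_id {O : SymOperad} {T' : LawTheory} (h : ∀ n, O.ops n → T'.Hom n 1)
    (Hh : IsOperadMapToQ O T' h) : T'.proj 1 0 = T'.id 1 := by
  have hs : (∑ _ : Fin 1, (1:ℕ)) = 1 := by simp
  have hc := Hh.2.1 (fun _ : Fin 1 => 1) (fun _ => O.unit) O.unit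
  rw [Hh.1] at hc
  have hx : HEq (h _ (O.comp (fun _ : Fin 1 => 1) (fun _ => O.unit) O.unit))
      (T'.id 1) :=
    HEq.trans (heq_app h hs (O.comp_unit_right O.unit)) (heq_of_eq Hh.1)
  rw [hc] at hx
  have e1 : T'.opComp (fun _ : Fin 1 => 1) (fun _ => T'.id 1) (T'.id 1)
      = T'.tuple (fun i : Fin 1 =>
          T'.pi fun j : Fin 1 => finSigma (fun _ : Fin 1 => 1) ⟨i, j⟩) := by
    unfold LawTheory.opComp LawTheory.prodMap
    rw [T'.comp_id]
    exact congrArg T'.tuple (funext fun i => T'.comp_id _)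
  rw [e1] at hx
  have h4 := heq_comp_right hs hx (T'.proj 1 0)
  rw [T'.tuple_proj _ 0, T'.id_comp] at h4
  have h6 : HEq (T'.pi fun j : Fin 1 => finSigma (fun _ : Fin 1 => 1) ⟨0, j⟩)
      (T'.id 1) :=
    HEq.trans (heq_pi hs _ (fun j => j)
      (fun j => finSigma_fin1_val ⟨0, j⟩)) (heq_of_eq pi_id)
  exact eq_of_heq (h4.symm.trans h6)

end L1

section FConstr

variable {O : SymOperad} {T T' : LawTheory}

def FmapQ (h : ∀ n, O.ops n → T'.Hom n 1) (Hh : IsOperadMapToQ O T' h) {n : ℕ} :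
    SpanOp O n → T'.Hom n 1 :=
  Quot.lift (fun p => T'.comp (T'.pi p.2.1) (h p.1 p.2.2)) (by
    rintro a b ⟨σ, rfl⟩
    show _ = T'.comp (T'.pi (a.2.1 ∘ ⇑σ)) (h _ (O.act σ⁻¹ a.2.2))
    rw [Hh.2.2]
    show _ = T'.comp (T'.pi (a.2.1 ∘ ⇑σ)) (T'.comp (T'.pi ⇑σ⁻¹) (h _ a.2.2))
    rw [← T'.assoc, pi_pi]
    have hφ : (a.2.1 ∘ ⇑σ) ∘ ⇑σ⁻¹ = a.2.1 := by
      funext j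
      simp [Function.comp, Equiv.Perm.inv_def, Equiv.apply_symm_apply]
    rw [hφ])

lemma FmapQ_mk (h : ∀ n, O.ops n → T'.Hom n 1) (Hh : IsOperadMapToQ O T' h)
    {n : ℕ} (p : PreOp O n) :
    FmapQ h Hh (Quot.mk _ p) = T'.comp (T'.pi p.2.1) (h p.1 p.2.2) := rfl

def Fmap (M : SpanModel O T) (h : ∀ n, O.ops n → T'.Hom n 1)
    (Hh : IsOperadMapToQ O T' h) : LawHom T T' where
  map {a b} f := T'.tuple (fun i => FmapQ h Hh (M.e f i))
  map_id n := by
    show T'.tuple (fun i => FmapQ h Hh (M.e (T.id n) i)) = T'.id n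
    have hcomp : (fun i => FmapQ h Hh (M.e (T.id n) i)) = fun i => T'.proj n i := by
      funext i
      rw [M.id_eq]
      show T'.comp (T'.pi (fun _ : Fin 1 => i)) (h 1 O.unit) = T'.proj n i
      rw [Hh.1, T'.comp_id]
      show T'.tuple (fun _ : Fin 1 => T'.proj n i) = T'.proj n i
      exact tuple_const (proj_one_eq_id h Hh) _
    rw [hcomp]
    exact pi_id
  map_proj n i := by
    show T'.tuple (fun j : Fin 1 => FmapQ h Hh (M.e (T.proj n i) j)) = T'.proj n i
    have hcomp : (fun j : Fin 1 => FmapQ h Hh (M.e (T.proj n i) j))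
        = fun _ => T'.proj n i := by
      funext j
      rw [M.proj_eq]
      show T'.comp (T'.pi (fun _ : Fin 1 => i)) (h 1 O.unit) = T'.proj n i
      rw [Hh.1, T'.comp_id]
      show T'.tuple (fun _ : Fin 1 => T'.proj n i) = T'.proj n i
      exact tuple_const (proj_one_eq_id h Hh) _
    rw [hcomp]
    exact tuple_const (proj_one_eq_id h Hh) _
  map_comp := by
    intro a b c f g
    show T'.tuple (fun j => FmapQ h Hh (M.e (T.comp f g) j))
        = T'.comp (T'.tuple fun i => FmapQ h Hh (M.e f i))
            (T'.tuple fun j => FmapQ h Hh (M.e g j))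
    classical
    have hyex : ∀ i, ∃ p, M.e f i = Quot.mk _ p := fun i => by
      obtain ⟨p, hp⟩ := Quot.exists_rep (M.e f i)
      exact ⟨p, hp.symm⟩
    choose y hy using hyex
    have hxex : ∀ j, ∃ p, M.e g j = Quot.mk _ p := fun j => by
      obtain ⟨p, hp⟩ := Quot.exists_rep (M.e g j)
      exact ⟨p, hp.symm⟩
    choose x hx using hxex
    rw [comp_tuple]
    refine congrArg T'.tuple (funext fun j => ?_)
    rw [M.comp_eq f g y x hy hx j, hx j, FmapQ_mk, FmapQ_mk]
    show T'.comp (T'.pi fun p =>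
        (y ((x j).2.1 ((finSigma fun l => (y ((x j).2.1 l)).1).symm p).1)).2.1
          ((finSigma fun l => (y ((x j).2.1 l)).1).symm p).2)
      (h _ (O.comp (fun l => (y ((x j).2.1 l)).1)
        (fun l => (y ((x j).2.1 l)).2.2) (x j).2.2)) = _
    rw [Hh.2.1]
    show T'.comp (T'.pi _) (T'.comp
        (T'.prodMap (fun l => (y ((x j).2.1 l)).1)
          (fun l => h _ (y ((x j).2.1 l)).2.2)) (h _ (x j).2.2)) = _
    rw [← T'.assoc, ← T'.assoc]
    refine congrArg (fun z => T'.comp z (h _ (x j).2.2)) ?_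
    -- RHS : comp X (pi χ)
    have hr : T'.comp (T'.tuple fun i => FmapQ h Hh (M.e f i)) (T'.pi (x j).2.1)
        = T'.tuple fun l => T'.comp (T'.pi (y ((x j).2.1 l)).2.1)
            (h _ (y ((x j).2.1 l)).2.2) := by
      show T'.comp (T'.tuple fun i => FmapQ h Hh (M.e f i))
          (T'.tuple fun l => T'.proj b ((x j).2.1 l)) = _
      rw [comp_tuple]
      refine congrArg T'.tuple (funext fun l => ?_)
      rw [T'.tuple_proj, hy ((x j).2.1 l), FmapQ_mk]
    rw [hr]
    -- LHS : comp (pi Φ) (prodMap ...)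
    show T'.comp (T'.pi _) (T'.tuple fun l =>
        T'.comp (T'.pi fun j' => finSigma (fun l => (y ((x j).2.1 l)).1) ⟨l, j'⟩)
          (h _ (y ((x j).2.1 l)).2.2)) = _
    rw [comp_tuple]
    refine congrArg T'.tuple (funext fun l => ?_)
    rw [← T'.assoc, pi_pi]
    refine congrArg (fun ψ => T'.comp (T'.pi ψ) (h _ (y ((x j).2.1 l)).2.2)) ?_
    funext j'
    show (fun s : Σ l', Fin ((y ((x j).2.1 l')).1) => (y ((x j).2.1 s.1)).2.1 s.2)
        ((finSigma fun l' => (y ((x j).2.1 l')).1).symm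
          (finSigma (fun l' => (y ((x j).2.1 l')).1) ⟨l, j'⟩)) = _
    rw [(finSigma fun l' => (y ((x j).2.1 l')).1).symm_apply_apply ⟨l, j'⟩]

lemma Fmap_eta (M : SpanModel O T) (h : ∀ n, O.ops n → T'.Hom n 1)
    (Hh : IsOperadMapToQ O T' h) (n : ℕ) (gg : O.ops n) :
    (Fmap M h Hh).map (M.eta n gg) = h n gg := by
  show T'.tuple (fun i => FmapQ h Hh (M.e (M.eta n gg) i)) = h n gg
  rw [e_eta M]
  have hc : (fun i : Fin 1 => FmapQ h Hh
      ((fun _ : Fin 1 => Quot.mk _ ⟨n, fun l => l, gg⟩) i)) = fun _ => h n gg := by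
    funext i
    show T'.comp (T'.pi fun l => l) (h n gg) = h n gg
    rw [pi_id, T'.id_comp]
  rw [hc]
  exact tuple_const (proj_one_eq_id h Hh) _

lemma LawHom.map_tuple' (F : LawHom T T') {a n : ℕ} (fs : Fin n → T.Hom a 1) :
    F.map (T.tuple fs) = T'.tuple (fun i => F.map (fs i)) := by
  conv_lhs => rw [← T'.tuple_eta (F.map (T.tuple fs))]
  exact congrArg T'.tuple (funext fun i => by
    rw [← F.map_proj, ← F.map_comp, T.tuple_proj])

lemma LawHom.map_pi' (F : LawHom T T') {n m : ℕ} (φ : Fin m → Fin n) :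
    F.map (T.pi φ) = T'.pi φ := by
  show F.map (T.tuple fun i => T.proj n (φ i)) = _
  rw [F.map_tuple']
  exact congrArg T'.tuple (funext fun i => F.map_proj n (φ i))

lemma F_determined (M : SpanModel O T) (h : ∀ n, O.ops n → T'.Hom n 1)
    (F : LawHom T T') (hF : ∀ n gg, F.map (M.eta n gg) = h n gg)
    {n m : ℕ} (f : T.Hom n m) (y : Fin m → PreOp O n)
    (hy : ∀ i, M.e f i = Quot.mk _ (y i)) :
    F.map f = T'.tuple (fun i => T'.comp (T'.pi (y i).2.1) (h _ (y i).2.2)) := by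
  conv_lhs => rw [← T.tuple_eta f]
  rw [F.map_tuple']
  exact congrArg T'.tuple (funext fun i => by
    rw [comp_proj_eq_pi_eta M f y hy i, F.map_comp, LawHom.map_pi', hF])

lemma F_unique (M : SpanModel O T) (h : ∀ n, O.ops n → T'.Hom n 1)
    (F₁ F₂ : LawHom T T') (h1 : ∀ n gg, F₁.map (M.eta n gg) = h n gg)
    (h2 : ∀ n gg, F₂.map (M.eta n gg) = h n gg) : F₁ = F₂ := by
  have key : ∀ (n m : ℕ) (f : T.Hom n m), F₁.map f = F₂.map f := by
    intro n m f
    classical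
    have hyex : ∀ i, ∃ p, M.e f i = Quot.mk _ p := fun i => by
      obtain ⟨p, hp⟩ := Quot.exists_rep (M.e f i)
      exact ⟨p, hp.symm⟩
    choose y hy using hyex
    rw [F_determined M h F₁ h1 f y hy, F_determined M h F₂ h2 f y hy]
  cases F₁
  cases F₂
  simp only [LawHom.mk.injEq]
  funext n m f
  exact key n m f

end FConstr

lemma pi_comp_prodMap {T : LawTheory} {n m : ℕ} (r : Fin m → ℕ)
    (φ : ∀ i, Fin (r i) → Fin n) (g' : ∀ i, T.Hom (r i) 1) :
    T.comp (T.pi fun p => φ ((finSigma r).symm p).1 ((finSigma r).symm p).2)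
      (T.prodMap r g') = T.tuple fun i => T.comp (T.pi (φ i)) (g' i) := by
  show T.comp (T.pi _) (T.tuple fun i =>
      T.comp (T.pi fun j => finSigma r ⟨i, j⟩) (g' i)) = _
  rw [comp_tuple]
  refine congrArg T.tuple (funext fun i => ?_)
  rw [← T.assoc, pi_pi]
  refine congrArg (fun ψ => T.comp (T.pi ψ) (g' i)) ?_
  funext j
  show (fun s : Σ i', Fin (r i') => φ s.1 s.2)
      ((finSigma r).symm (finSigma r ⟨i, j⟩)) = _
  rw [(finSigma r).symm_apply_apply ⟨i, j⟩]


/-- `P ⊣ Q`, with unit `η_O : O → Q(P(O))`, `g ↦ (id_n, !, g)` — which is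
an injective morphism of operads, so `P` is faithful — satisfying the universal
property of an adjunction, and counit `ε_T : P(Q(T)) → T` sending a span
`(φ, f, (g_i))` to `(g₁ × ⋯ × g_m) ∘ π_φ`. -/
theorem span_adjunction (O : SymOperad) (T : LawTheory) (M : SpanModel O T) :
    (∀ n : ℕ, Function.Injective (M.eta n)) ∧
    IsOperadMapToQ O T M.eta ∧
    (∀ (T' : LawTheory) (h : ∀ n : ℕ, O.ops n → T'.Hom n 1),
      IsOperadMapToQ O T' h →
      ∃! F : LawHom T T', ∀ (n : ℕ) (g : O.ops n), F.map (M.eta n g) = h n g) ∧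
    (∀ (T' : LawTheory) (S' : SymOperad), IsOperadOf T' S' →
      ∀ (T₀ : LawTheory) (M' : SpanModel S' T₀),
      ∃ ε : LawHom T₀ T',
        ∀ (n m : ℕ) (fm : T₀.Hom n m) (r : Fin m → ℕ)
          (φ : ∀ i, Fin (r i) → Fin n) (g : ∀ i, S'.ops (r i))
          (g' : ∀ i, T'.Hom (r i) 1),
          (∀ i, HEq (g i) (g' i)) →
          (∀ i, M'.e fm i = Quot.mk _ ⟨r i, φ i, g i⟩) →
          ε.map fm = T'.comp
            (T'.pi fun p : Fin (∑ i, r i) =>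
              φ ((finSigma r).symm p).1 ((finSigma r).symm p).2)
            (T'.prodMap r g')) := by
  refine ⟨eta_injective M, eta_isOperadMap M, ?_, ?_⟩
  · intro T' h Hh
    exact ⟨Fmap M h Hh, Fmap_eta M h Hh,
      fun F' hF' => F_unique M h F' (Fmap M h Hh) hF' (Fmap_eta M h Hh)⟩
  · intro T' S' hS' T₀ M'
    obtain ⟨ops1, unit1, comp1, act1, a1, a2, a3, a4, a5, a6, a7⟩ := S'
    obtain ⟨hops, hunit, hcomp, hact⟩ := hS'
    change ops1 = _ at hops
    subst hops
    have hcomp' : @comp1 = @LawTheory.opComp T' := eq_of_heq hcomp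
    have hact' : @act1 = @LawTheory.opAct T' := eq_of_heq hact
    have Hq : IsOperadMapToQ ⟨fun n => T'.Hom n 1, unit1, @comp1, @act1, a1, a2, a3, a4, a5, a6, a7⟩ T' (fun n x => x) := by
      refine ⟨eq_of_heq hunit, ?_, ?_⟩
      · intro k ns gs f
        show comp1 ns gs f = T'.opComp ns (fun i => gs i) f
        exact congrFun (congrFun (congrFun (congrFun hcomp' k) ns) (fun i => gs i)) f
      · intro n σ f
        show act1 σ f = T'.opAct σ f
        exact congrFun (congrFun (congrFun hact' n) σ) f
    refine ⟨Fmap M' (fun n x => x) Hq, ?_⟩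
    intro n m fm r φ g g' hg hrep
    have hg' : ∀ i, g i = g' i := fun i => eq_of_heq (hg i)
    have hdet := F_determined M' (fun n x => x) (Fmap M' (fun n x => x) Hq)
      (Fmap_eta M' (fun n x => x) Hq) fm (fun i => ⟨r i, φ i, g i⟩) hrep
    rw [hdet, pi_comp_prodMap]
    exact congrArg T'.tuple (funext fun i => by
      show T'.comp (T'.pi (φ i)) (g i) = T'.comp (T'.pi (φ i)) (g' i)
      rw [hg' i])
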